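/- arXiv:2504.02518 — 2 statements merged into one kernel-verified Lean document; each statement's English description precedes it below -/
import Mathlib

section
/- For indices i, j with j ≤ i, the real function f(t) = ℓ(μ, B(t)), where B(t) is B with its (i,j)-entry replaced by t, is differentiable at t = B_{ij} and its derivative equals 𝟙_{i=j}/B_{ii} − z_i·r_j, where 𝟙_{i=j} is 1 if i = j and 0 otherwise, z_i = (B·(y−μ))_i, and r_j = y_j − μ_j. -/
open Matrix

/-- Multivariate Gaussian log-likelihood in the Cholesky precision parametrization
`Ω = Bᵀ B`: `ℓ(μ, B) = -(D/2)·log(2π) + log(det B) - (1/2)·‖B(y-μ)‖²`. -/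
noncomputable def gaussCholLL (D : ℕ) (y μ : Fin D → ℝ)
    (B : Matrix (Fin D) (Fin D) ℝ) : ℝ :=
  -((D : ℝ) / 2) * Real.log (2 * Real.pi) + Real.log B.det
    - (1 / 2) * ∑ k, (B.mulVec (y - μ) k) ^ 2

/-- The matrix `B` with its `(i,j)`-entry replaced by `t`. -/
def updEntry {D : ℕ} (B : Matrix (Fin D) (Fin D) ℝ) (i j : Fin D) (t : ℝ) :
    Matrix (Fin D) (Fin D) ℝ :=
  Matrix.of fun k l => if k = i ∧ l = j then t else B k l

lemma updEntry_self {D : ℕ} (B : Matrix (Fin D) (Fin D) ℝ) (i j : Fin D) :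
    updEntry B i j (B i j) = B := by
  ext k l
  simp only [updEntry, Matrix.of_apply]
  split_ifs with h
  · rw [h.1, h.2]
  · rfl

/-- First partial derivative of the Gaussian log-likelihood with respect to the entry
`B_{ij}` (with `j ≤ i`): it equals `𝟙_{i=j}/B_{ii} - z_i·r_j` where `z = B(y-μ)` and
`r = y - μ`. -/
theorem gaussChol_deriv_B (D : ℕ) (hD : 1 ≤ D) (y μ : Fin D → ℝ)
    (B : Matrix (Fin D) (Fin D) ℝ)
    (hLT : ∀ k l : Fin D, k < l → B k l = 0)
    (hdiag : ∀ k, 0 < B k k) (i j : Fin D) (hji : j ≤ i) :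
    HasDerivAt (fun t : ℝ => gaussCholLL D y μ (updEntry B i j t))
      ((if i = j then (B i i)⁻¹ else 0) - B.mulVec (y - μ) i * (y j - μ j))
      (B i j) := by
  classical
  set r : Fin D → ℝ := y - μ with hrdef
  set c : ℝ := B i j with hc
  -- derivative of the k-th entry of the matrix-vector product
  have hmv : ∀ k : Fin D, HasDerivAt (fun t => (updEntry B i j t).mulVec r k)
      (if k = i then r j else 0) c := by
    intro k
    have hfun : (fun t => (updEntry B i j t).mulVec r k)
        = fun t => ∑ l, (if k = i ∧ l = j then t else B k l) * r l := by
      funext t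
      simp [Matrix.mulVec, dotProduct, updEntry]
    rw [hfun]
    have h1 : HasDerivAt (fun t : ℝ => ∑ l, (if k = i ∧ l = j then t else B k l) * r l)
        (∑ l, (if k = i ∧ l = j then r l else 0)) c := by
      apply HasDerivAt.fun_sum
      intro l _
      by_cases h : k = i ∧ l = j
      · rcases h with ⟨rfl, rfl⟩
        simpa using (hasDerivAt_id c).mul_const (r l)
      · simp only [h, if_false]
        exact hasDerivAt_const c _
    refine h1.congr_deriv ?_
    by_cases hk : k = i <;> simp [hk]
  -- derivative of the squares
  have hsq : ∀ k : Fin D, HasDerivAt (fun t => ((updEntry B i j t).mulVec r k) ^ 2)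
      (if k = i then 2 * B.mulVec r i * r j else 0) c := by
    intro k
    have h2 := (hmv k).pow 2
    have hcc : updEntry B i j c = B := by rw [hc, updEntry_self]
    rw [hcc] at h2
    refine h2.congr_deriv ?_
    by_cases hk : k = i <;> simp [hk]
  have hsum : HasDerivAt (fun t => ∑ k, ((updEntry B i j t).mulVec r k) ^ 2)
      (2 * B.mulVec r i * r j) c := by
    have h3 := HasDerivAt.fun_sum (fun k (_ : k ∈ Finset.univ) => hsq k)
    refine h3.congr_deriv ?_
    simp
  -- lower triangularity of the updated matrix
  have hLT' : ∀ t : ℝ, (updEntry B i j t).BlockTriangular OrderDual.toDual := by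
    intro t k l hkl
    have hkl' : k < l := hkl
    have hne : ¬(k = i ∧ l = j) := by
      rintro ⟨rfl, rfl⟩
      exact absurd (lt_of_le_of_lt hji hkl') (lt_irrefl _)
    simp [updEntry, hne, hLT k l hkl']
  have hdet : ∀ t : ℝ, (updEntry B i j t).det
      = ∏ k, (if k = i ∧ k = j then t else B k k) := by
    intro t
    rw [Matrix.det_of_lowerTriangular _ (hLT' t)]
    rfl
  -- derivative of the log-determinant
  have hlog : HasDerivAt (fun t => Real.log ((updEntry B i j t).det))
      (if i = j then (B i i)⁻¹ else 0) c := by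
    by_cases hij : i = j
    · subst hij
      set P : ℝ := ∏ k ∈ Finset.univ.erase i, B k k with hP
      have hPpos : 0 < P := by
        apply Finset.prod_pos
        intro k _
        exact hdiag k
      have hfun : (fun t => Real.log ((updEntry B i i t).det))
          = fun t => Real.log (t * P) := by
        funext t
        rw [hdet t]
        congr 1
        rw [← Finset.mul_prod_erase Finset.univ _ (Finset.mem_univ i)]
        simp only [and_self, if_true]
        congr 1
        apply Finset.prod_congr rfl
        intro k hk
        have hki : k ≠ i := Finset.ne_of_mem_erase hk
        simp [hki]
      rw [hfun]
      have hcpos : 0 < c := by rw [hc]; exact hdiag i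
      have hm : HasDerivAt (fun t : ℝ => t * P) P c := by
        simpa using (hasDerivAt_id c).mul_const P
      have hl := (Real.hasDerivAt_log (ne_of_gt (mul_pos hcpos hPpos))).comp c hm
      refine hl.congr_deriv ?_
      rw [if_pos rfl, hc]
      field_simp
    · have hfun : (fun t => Real.log ((updEntry B i j t).det))
          = fun _ => Real.log (∏ k, B k k) := by
        funext t
        rw [hdet t]
        congr 1
        apply Finset.prod_congr rfl
        intro k _
        have : ¬(k = i ∧ k = j) := by
          rintro ⟨rfl, rfl⟩
          exact hij rfl
        simp [this]
      rw [hfun]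
      simp only [hij, if_false]
      exact hasDerivAt_const c _
  -- assemble
  have H := ((hasDerivAt_const c (-((D : ℝ) / 2) * Real.log (2 * Real.pi))).add hlog).sub
    (hsum.const_mul (1 / 2 : ℝ))
  have hr : r j = y j - μ j := by simp [hrdef]
  simp only [gaussCholLL, ← hrdef]
  refine H.congr_deriv ?_
  rw [hr]
  ring
end

section
/- For indices i, j with j ≤ i, the real function f(t) = ℓ(μ, B(t)), where B(t) is B with its (i,j)-entry replaced by t, is twice differentiable at t = B_{ij} and its second derivative equals −𝟙_{i=j}/B_{ii}² − r_j², where 𝟙_{i=j} is 1 if i = j and 0 otherwise and r_j = y_j − μ_j. -/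
open Matrix

/-- Second partial derivative of the Gaussian log-likelihood with respect to the entry
`B_{ij}` (with `j ≤ i`): the map `t ↦ ℓ(μ, B(t))` is twice differentiable at `t = B i j`
and its second derivative equals `-𝟙_{i=j}/B_{ii}² - r_j²` where `r = y - μ`. -/
theorem gaussChol_deriv2_B (D : ℕ) (hD : 1 ≤ D) (y μ : Fin D → ℝ)
    (B : Matrix (Fin D) (Fin D) ℝ)
    (hLT : ∀ k l : Fin D, k < l → B k l = 0)
    (hdiag : ∀ k, 0 < B k k) (i j : Fin D) (hji : j ≤ i) :
    (∀ᶠ t in nhds (B i j),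
        DifferentiableAt ℝ (fun t : ℝ => gaussCholLL D y μ (updEntry B i j t)) t) ∧
      HasDerivAt (deriv (fun t : ℝ => gaussCholLL D y μ (updEntry B i j t)))
        (-(if i = j then ((B i i) ^ 2)⁻¹ else 0) - (y j - μ j) ^ 2)
        (B i j) := by

  classical
  set c : ℝ := ∑ l ∈ ({j}ᶜ : Finset (Fin D)), B i l * (y l - μ l) with hc
  set S : ℝ := ∑ k ∈ ({i}ᶜ : Finset (Fin D)), (B.mulVec (y - μ) k) ^ 2 with hS
  set A : ℝ := -((D : ℝ) / 2) * Real.log (2 * Real.pi) with hA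
  have hmv : ∀ t : ℝ, ∀ k, (updEntry B i j t).mulVec (y - μ) k
      = if k = i then t * (y j - μ j) + c else B.mulVec (y - μ) k := by
    intro t k
    by_cases hk : k = i
    · subst hk
      rw [if_pos rfl]
      show ∑ l, (if k = k ∧ l = j then t else B k l) * (y - μ) l = _
      rw [Fintype.sum_eq_add_sum_compl j]
      congr 1
      · simp
      · rw [hc]
        refine Finset.sum_congr rfl fun l hl => ?_
        have hl' : l ≠ j := by simpa using hl
        simp [hl']
    · rw [if_neg hk]
      show ∑ l, (if k = i ∧ l = j then t else B k l) * (y - μ) l = _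
      refine Finset.sum_congr rfl fun l _ => ?_
      simp [hk, Matrix.mulVec, dotProduct]
  have hsum : ∀ t : ℝ, ∑ k, ((updEntry B i j t).mulVec (y - μ) k) ^ 2
      = (t * (y j - μ j) + c) ^ 2 + S := by
    intro t
    rw [Fintype.sum_eq_add_sum_compl i]
    congr 1
    · rw [hmv t i, if_pos rfl]
    · rw [hS]
      refine Finset.sum_congr rfl fun k hk => ?_
      have hk' : k ≠ i := by simpa using hk
      rw [hmv t k, if_neg hk']
  by_cases hij : i = j
  · subst hij
    set P : ℝ := ∏ k ∈ ({i}ᶜ : Finset (Fin D)), B k k with hPdef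
    have hP : 0 < P := Finset.prod_pos fun k _ => hdiag k
    have hdet : ∀ t : ℝ, (updEntry B i i t).det = t * P := by
      intro t
      have htri : (updEntry B i i t).BlockTriangular OrderDual.toDual := by
        intro k l hkl
        have hkl' : k < l := hkl
        have : ¬(k = i ∧ l = i) := by
          rintro ⟨rfl, rfl⟩; exact lt_irrefl _ hkl'
        show (if k = i ∧ l = i then t else B k l) = 0
        rw [if_neg this]
        exact hLT k l hkl'
      rw [Matrix.det_of_lowerTriangular _ htri, Fintype.prod_eq_mul_prod_compl i]
      congr 1
      · show (if i = i ∧ i = i then t else B i i) = t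
        simp
      · rw [hPdef]
        refine Finset.prod_congr rfl fun k hk => ?_
        have hk' : k ≠ i := by simpa using hk
        show (if k = i ∧ k = i then t else B k k) = B k k
        simp [hk']
    have hfun : (fun t : ℝ => gaussCholLL D y μ (updEntry B i i t))
        = fun t : ℝ => A + Real.log (t * P)
          - (1 / 2) * ((t * (y i - μ i) + c) ^ 2 + S) := by
      funext t
      rw [gaussCholLL, hdet t, hsum t]
    have hderiv : ∀ t : ℝ, 0 < t →
        HasDerivAt (fun t : ℝ => A + Real.log (t * P)
          - (1 / 2) * ((t * (y i - μ i) + c) ^ 2 + S))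
          (t⁻¹ - (t * (y i - μ i) + c) * (y i - μ i)) t := by
      intro t ht
      have h1 : HasDerivAt (fun t : ℝ => Real.log (t * P)) t⁻¹ t := by
        have := (Real.hasDerivAt_log (mul_ne_zero ht.ne' hP.ne')).comp t
          ((hasDerivAt_id t).mul_const P)
        convert this using 1
        any_goals rfl
        field_simp
      have h2 : HasDerivAt (fun t : ℝ => (t * (y i - μ i) + c) ^ 2 + S)
          (2 * (t * (y i - μ i) + c) ^ 1 * (1 * (y i - μ i))) t :=
        ((((hasDerivAt_id t).mul_const (y i - μ i)).add_const c).pow 2).add_const S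
      have h3 := (h1.const_add A).sub (h2.const_mul (1 / 2))
      convert h3 using 1
      any_goals rfl
      ring
    rw [hfun]
    constructor
    · filter_upwards [eventually_gt_nhds (hdiag i)] with t ht
      exact (hderiv t ht).differentiableAt
    · have hEq : deriv (fun t : ℝ => A + Real.log (t * P)
          - (1 / 2) * ((t * (y i - μ i) + c) ^ 2 + S))
          =ᶠ[nhds (B i i)] fun t => t⁻¹ - (t * (y i - μ i) + c) * (y i - μ i) := by
        filter_upwards [eventually_gt_nhds (hdiag i)] with t ht
        exact (hderiv t ht).deriv
      rw [hEq.hasDerivAt_iff]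
      have h4 : HasDerivAt (fun t : ℝ => t⁻¹) (-((B i i) ^ 2)⁻¹) (B i i) :=
        hasDerivAt_inv (hdiag i).ne'
      have h5 : HasDerivAt (fun t : ℝ => (t * (y i - μ i) + c) * (y i - μ i))
          ((1 * (y i - μ i)) * (y i - μ i)) (B i i) :=
        (((hasDerivAt_id _).mul_const (y i - μ i)).add_const c).mul_const (y i - μ i)
      have h6 := h4.sub h5
      convert h6 using 1
      any_goals rfl
      simp
      ring
  · have hdet : ∀ t : ℝ, (updEntry B i j t).det = B.det := by
      intro t
      have htri : (updEntry B i j t).BlockTriangular OrderDual.toDual := by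
        intro k l hkl
        have hkl' : k < l := hkl
        have : ¬(k = i ∧ l = j) := by
          rintro ⟨rfl, rfl⟩; exact absurd hji (not_le_of_gt hkl')
        show (if k = i ∧ l = j then t else B k l) = 0
        rw [if_neg this]
        exact hLT k l hkl'
      have htriB : B.BlockTriangular OrderDual.toDual := fun k l hkl => hLT k l hkl
      rw [Matrix.det_of_lowerTriangular _ htri, Matrix.det_of_lowerTriangular _ htriB]
      refine Finset.prod_congr rfl fun k _ => ?_
      have : ¬(k = i ∧ k = j) := by rintro ⟨rfl, rfl⟩; exact hij rfl
      show (if k = i ∧ k = j then t else B k k) = B k k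
      rw [if_neg this]
    have hfun : (fun t : ℝ => gaussCholLL D y μ (updEntry B i j t))
        = fun t : ℝ => A + Real.log B.det
          - (1 / 2) * ((t * (y j - μ j) + c) ^ 2 + S) := by
      funext t
      rw [gaussCholLL, hdet t, hsum t]
    have hderiv : ∀ t : ℝ,
        HasDerivAt (fun t : ℝ => A + Real.log B.det
          - (1 / 2) * ((t * (y j - μ j) + c) ^ 2 + S))
          (-((t * (y j - μ j) + c) * (y j - μ j))) t := by
      intro t
      have h2 : HasDerivAt (fun t : ℝ => (t * (y j - μ j) + c) ^ 2 + S)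
          (2 * (t * (y j - μ j) + c) ^ 1 * (1 * (y j - μ j))) t :=
        ((((hasDerivAt_id t).mul_const (y j - μ j)).add_const c).pow 2).add_const S
      have h3 := ((hasDerivAt_const t (A + Real.log B.det)).sub (h2.const_mul (1 / 2)))
      have h3' : HasDerivAt (fun t : ℝ => A + Real.log B.det
          - (1 / 2) * ((t * (y j - μ j) + c) ^ 2 + S))
          (0 - (1 / 2) * (2 * (t * (y j - μ j) + c) ^ 1 * (1 * (y j - μ j)))) t := h3
      convert h3' using 1
      ring
    rw [hfun]
    constructor
    · exact Filter.Eventually.of_forall fun t => (hderiv t).differentiableAt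
    · have hEq : deriv (fun t : ℝ => A + Real.log B.det
          - (1 / 2) * ((t * (y j - μ j) + c) ^ 2 + S))
          = fun t => -((t * (y j - μ j) + c) * (y j - μ j)) :=
        funext fun t => (hderiv t).deriv
      rw [hEq]
      have h5 : HasDerivAt (fun t : ℝ => (t * (y j - μ j) + c) * (y j - μ j))
          ((1 * (y j - μ j)) * (y j - μ j)) (B i j) :=
        (((hasDerivAt_id _).mul_const (y j - μ j)).add_const c).mul_const (y j - μ j)
      have h6 := h5.neg
      convert h6 using 1
      any_goals rfl
      rw [if_neg hij]
      ring
end
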